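/- arXiv:2002.00170 — 3 statements merged into one kernel-verified Lean document; each statement's English description precedes it below -/
import Mathlib

section
/- Let α ≥ −1/2 and let C_α = 2(α+1) if α ≥ 1/2 and C_α = 2(α+1) + 1/16 if −1/2 ≤ α < 1/2. Then for every n ∈ ℕ and every real x ≥ 4n + C_α, |L_n^α(x)| ≤ x^n / n!. -/
open Real

/-- The generalized Laguerre polynomial of order `α` and degree `n`. -/
noncomputable def laguerreL (α : ℝ) (n : ℕ) (x : ℝ) : ℝ :=
  ∑ k ∈ Finset.range (n + 1), (-1 : ℝ) ^ k *
    (Real.Gamma (n + α + 1) / (Real.Gamma (k + α + 1) * (n - k).factorial * k.factorial)) * x ^ k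

open Finset

noncomputable def lagC (α : ℝ) (m k : ℕ) : ℝ :=
  (-1 : ℝ) ^ k * (Real.Gamma ((m:ℝ) + α + 1) /
    (Real.Gamma ((k:ℝ) + α + 1) * (m - k).factorial * k.factorial))

lemma lag_eq (α : ℝ) (m : ℕ) (x : ℝ) :
    laguerreL α m x = ∑ k ∈ Finset.range (m + 1), lagC α m k * x ^ k := rfl

lemma gamma_pos' (α : ℝ) (hα : -1 < α) (k : ℕ) : 0 < Real.Gamma ((k:ℝ) + α + 1) :=
  Real.Gamma_pos_of_pos (by have : (0:ℝ) ≤ (k:ℝ) := Nat.cast_nonneg k; linarith)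

lemma gamma_step (α : ℝ) (hα : -1 < α) (j : ℕ) :
    Real.Gamma (((j+1:ℕ):ℝ) + α + 1) = (((j:ℕ):ℝ) + α + 1) * Real.Gamma (((j:ℕ):ℝ) + α + 1) := by
  have h : ((j+1:ℕ):ℝ) + α + 1 = (((j:ℕ):ℝ) + α + 1) + 1 := by push_cast; ring
  have hj : (0:ℝ) ≤ (j:ℝ) := Nat.cast_nonneg j
  rw [h, Real.Gamma_add_one (by linarith)]

set_option maxHeartbeats 1000000 in
lemma coeff_main (α : ℝ) (hα : -1 < α) (k m : ℕ) :
    (((k:ℝ)+(m:ℝ)+1)+2) * lagC α (k+m+3) (k+1) + lagC α (k+m+2) k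
      + (((k:ℝ)+(m:ℝ)+1)+1+α) * lagC α (k+m+1) (k+1)
      = (2*((k:ℝ)+(m:ℝ)+1)+3+α) * lagC α (k+m+2) (k+1) := by
  have hk : (0:ℝ) ≤ (k:ℝ) := Nat.cast_nonneg k
  have hm : (0:ℝ) ≤ (m:ℝ) := Nat.cast_nonneg m
  have hq : (0:ℝ) < (k:ℝ) + α + 1 := by linarith
  simp only [lagC]
  rw [show k+m+3-(k+1) = m+2 from by omega, show k+m+2-k = m+2 from by omega,
      show k+m+1-(k+1) = m from by omega, show k+m+2-(k+1) = m+1 from by omega]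
  rw [show k+m+3 = (k+m+2)+1 from rfl, gamma_step α hα (k+m+2),
      show k+m+2 = (k+m+1)+1 from rfl, gamma_step α hα (k+m+1),
      gamma_step α hα k]
  rw [show (m+2).factorial = (m+2)*((m+1)*m.factorial) from by
        rw [Nat.factorial_succ, Nat.factorial_succ],
      show (m+1).factorial = (m+1)*m.factorial from Nat.factorial_succ m,
      show (k+1).factorial = (k+1)*k.factorial from Nat.factorial_succ k]
  have hG : Real.Gamma ((k:ℝ)+α+1) ≠ 0 := (gamma_pos' α hα k).ne'
  have hF : ((m.factorial : ℝ)) ≠ 0 := by positivity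
  have hK : ((k.factorial : ℝ)) ≠ 0 := by positivity
  push_cast
  rw [pow_succ]
  have h1 : ((m:ℝ)+1) ≠ 0 := by linarith
  have h2 : ((m:ℝ)+2) ≠ 0 := by linarith
  have h3 : ((k:ℝ)+1) ≠ 0 := by linarith
  field_simp
  ring

lemma coeff_top (α : ℝ) (hα : -1 < α) (n : ℕ) :
    ((n:ℝ)+2) * lagC α (n+2) (n+2) + lagC α (n+1) (n+1) = 0 := by
  have hn : (0:ℝ) ≤ (n:ℝ) := Nat.cast_nonneg n
  simp only [lagC, Nat.sub_self, Nat.factorial_zero]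
  rw [show n+2 = (n+1)+1 from rfl, gamma_step α hα (n+1),
      show (n+1+1).factorial = (n+1+1)*(n+1).factorial from Nat.factorial_succ _]
  have hG : Real.Gamma ((n:ℝ)+1+α+1) ≠ 0 := by
    have := gamma_pos' α hα (n+1); push_cast at this; exact this.ne'
  have hF : (((n+1).factorial : ℝ)) ≠ 0 := by positivity
  push_cast
  rw [pow_succ]
  have h1 : ((n:ℝ)+1+α+1) ≠ 0 := by linarith
  have h2 : ((n:ℝ)+1+1) ≠ 0 := by linarith
  field_simp
  ring

lemma coeff_second (α : ℝ) (hα : -1 < α) (n : ℕ) :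
    ((n:ℝ)+2) * lagC α (n+2) (n+1) + lagC α (n+1) n = (2*(n:ℝ)+3+α) * lagC α (n+1) (n+1) := by
  have hn : (0:ℝ) ≤ (n:ℝ) := Nat.cast_nonneg n
  simp only [lagC]
  rw [show n+2-(n+1) = 1 from by omega, show n+1-n = 1 from by omega, Nat.sub_self]
  rw [show n+2 = (n+1)+1 from rfl, gamma_step α hα (n+1), gamma_step α hα n,
      show (n+1).factorial = (n+1)*n.factorial from Nat.factorial_succ _]
  have hG : Real.Gamma ((n:ℝ)+α+1) ≠ 0 := (gamma_pos' α hα n).ne'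
  have hF : ((n.factorial : ℝ)) ≠ 0 := by positivity
  push_cast
  rw [pow_succ]
  have h1 : ((n:ℝ)+α+1) ≠ 0 := by linarith
  have h2 : ((n:ℝ)+1+α+1) ≠ 0 := by linarith
  have h3 : ((n:ℝ)+1) ≠ 0 := by linarith
  field_simp
  ring

lemma coeff_zero (α : ℝ) (hα : -1 < α) (n : ℕ) :
    ((n:ℝ)+2) * lagC α (n+2) 0 + ((n:ℝ)+1+α) * lagC α n 0 = (2*(n:ℝ)+3+α) * lagC α (n+1) 0 := by
  have hn : (0:ℝ) ≤ (n:ℝ) := Nat.cast_nonneg n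
  simp only [lagC, Nat.sub_zero, Nat.factorial_zero, pow_zero, Nat.cast_zero, zero_add]
  rw [show n+2 = (n+1)+1 from rfl, gamma_step α hα (n+1), gamma_step α hα n,
      show (n+1+1).factorial = (n+1+1)*((n+1)*n.factorial) from by
        rw [Nat.factorial_succ, Nat.factorial_succ],
      show (n+1).factorial = (n+1)*n.factorial from Nat.factorial_succ _]
  have hG : Real.Gamma (α+1) ≠ 0 := by
    have := gamma_pos' α hα 0; push_cast at this; simpa using this.ne'
  have hG2 : Real.Gamma ((n:ℝ)+α+1) ≠ 0 := (gamma_pos' α hα n).ne'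
  have hF : ((n.factorial : ℝ)) ≠ 0 := by positivity
  push_cast
  have h1 : ((n:ℝ)+α+1) ≠ 0 := by linarith
  have h2 : ((n:ℝ)+1+α+1) ≠ 0 := by linarith
  have h3 : ((n:ℝ)+1) ≠ 0 := by linarith
  have h4 : ((n:ℝ)+1+1) ≠ 0 := by linarith
  field_simp
  ring

lemma laguerre_rec (α : ℝ) (hα : -1 < α) (n : ℕ) (x : ℝ) :
    ((n:ℝ)+2) * laguerreL α (n+2) x =
      (2*(n:ℝ)+3+α - x) * laguerreL α (n+1) x - ((n:ℝ)+1+α) * laguerreL α n x := by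
  have key :
      (∑ k ∈ range n, ((n:ℝ)+2) * (lagC α (n+2) (k+1) * x^(k+1)))
        + (∑ k ∈ range n, lagC α (n+1) k * x^(k+1))
        + (∑ k ∈ range n, ((n:ℝ)+1+α) * (lagC α n (k+1) * x^(k+1)))
      = ∑ k ∈ range n, (2*(n:ℝ)+3+α) * (lagC α (n+1) (k+1) * x^(k+1)) := by
    rw [← Finset.sum_add_distrib, ← Finset.sum_add_distrib]
    refine Finset.sum_congr rfl fun k hk => ?_
    rw [Finset.mem_range] at hk
    obtain ⟨m, rfl⟩ : ∃ m, n = k + m + 1 := ⟨n - k - 1, by omega⟩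
    rw [show k+m+1+2 = k+m+3 from by omega, show k+m+1+1 = k+m+2 from by omega]
    have h := coeff_main α hα k m
    push_cast
    linear_combination x^(k+1) * h
  have b1 : ((n:ℝ)+2) * (lagC α (n+2) (n+2) * x^(n+2)) + lagC α (n+1) (n+1) * x^(n+2) = 0 := by
    linear_combination x^(n+2) * coeff_top α hα n
  have b2 : ((n:ℝ)+2) * (lagC α (n+2) (n+1) * x^(n+1)) + lagC α (n+1) n * x^(n+1)
      = (2*(n:ℝ)+3+α) * (lagC α (n+1) (n+1) * x^(n+1)) := by
    linear_combination x^(n+1) * coeff_second α hα n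
  have b3 : ((n:ℝ)+2) * (lagC α (n+2) 0 * x^0) + ((n:ℝ)+1+α) * (lagC α n 0 * x^0)
      = (2*(n:ℝ)+3+α) * (lagC α (n+1) 0 * x^0) := by
    linear_combination x^0 * coeff_zero α hα n
  have eA : ((n:ℝ)+2) * laguerreL α (n+2) x
      = (∑ k ∈ range n, ((n:ℝ)+2) * (lagC α (n+2) (k+1) * x^(k+1)))
        + ((n:ℝ)+2) * (lagC α (n+2) (n+1) * x^(n+1))
        + ((n:ℝ)+2) * (lagC α (n+2) (n+2) * x^(n+2))
        + ((n:ℝ)+2) * (lagC α (n+2) 0 * x^0) := by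
    rw [lag_eq, Finset.mul_sum, show n+2+1 = n+3 from rfl, Finset.sum_range_succ',
        Finset.sum_range_succ, Finset.sum_range_succ,
        show n+1+1 = n+2 from rfl]
  have eB : x * laguerreL α (n+1) x
      = (∑ k ∈ range n, lagC α (n+1) k * x^(k+1))
        + lagC α (n+1) n * x^(n+1) + lagC α (n+1) (n+1) * x^(n+2) := by
    have hstep : ∀ (m k : ℕ), x * (lagC α m k * x^k) = lagC α m k * x^(k+1) := by
      intro m k; rw [pow_succ]; ring
    rw [lag_eq, Finset.mul_sum]
    simp only [hstep]
    rw [show n+1+1 = n+2 from rfl, Finset.sum_range_succ, Finset.sum_range_succ,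
        show n+1+1 = n+2 from rfl]
  have eC : ((n:ℝ)+1+α) * laguerreL α n x
      = (∑ k ∈ range n, ((n:ℝ)+1+α) * (lagC α n (k+1) * x^(k+1)))
        + ((n:ℝ)+1+α) * (lagC α n 0 * x^0) := by
    rw [lag_eq, Finset.mul_sum, Finset.sum_range_succ']
  have eD : (2*(n:ℝ)+3+α) * laguerreL α (n+1) x
      = (∑ k ∈ range n, (2*(n:ℝ)+3+α) * (lagC α (n+1) (k+1) * x^(k+1)))
        + (2*(n:ℝ)+3+α) * (lagC α (n+1) (n+1) * x^(n+1))
        + (2*(n:ℝ)+3+α) * (lagC α (n+1) 0 * x^0) := by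
    rw [lag_eq, Finset.mul_sum, show n+1+1 = n+2 from rfl, Finset.sum_range_succ',
        Finset.sum_range_succ]
  have hsplit : (2*(n:ℝ)+3+α - x) * laguerreL α (n+1) x
      = (2*(n:ℝ)+3+α) * laguerreL α (n+1) x - x * laguerreL α (n+1) x := by ring
  rw [hsplit, eA, eB, eC, eD]
  linarith [key, b1, b2, b3]

theorem stmt4 (α : ℝ) (hα : -1/2 ≤ α) (Cα : ℝ)
    (hC : Cα = if (1/2 : ℝ) ≤ α then 2 * (α + 1) else 2 * (α + 1) + 1/16) :
    ∀ (n : ℕ) (x : ℝ), 4 * n + Cα ≤ x → |laguerreL α n x| ≤ x ^ n / n.factorial := by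
  have hα1 : (-1:ℝ) < α := by linarith
  have hC' : 2 * (α + 1) ≤ Cα := by rw [hC]; split_ifs <;> linarith
  intro n
  induction n using Nat.twoStepInduction with
  | zero =>
    intro x hx
    have h0 : laguerreL α 0 x = 1 := by
      have hg : Real.Gamma (α + 1) ≠ 0 := by
        have := gamma_pos' α hα1 0; push_cast at this; simpa using this.ne'
      simp [laguerreL, Finset.sum_range_one]
      field_simp
      exact hg
    rw [h0]
    norm_num
  | one =>
    intro x hx
    have hxl : 4 + Cα ≤ x := by push_cast at hx; linarith
    have hgpos : 0 < Real.Gamma (α+1) := Real.Gamma_pos_of_pos (by linarith)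
    have h1 : laguerreL α 1 x = (α + 1) - x := by
      simp only [laguerreL, Finset.sum_range_succ, Finset.sum_range_one]
      norm_num
      rw [show (1:ℝ) + α + 1 = (α+1)+1 by ring]
      rw [div_self (ne_of_gt (Real.Gamma_pos_of_pos (by linarith : (0:ℝ) < (α+1)+1)))]
      rw [Real.Gamma_add_one (ne_of_gt (by linarith : (0:ℝ) < α+1))]
      rw [mul_div_assoc, div_self hgpos.ne', mul_one, one_mul]
      ring
    rw [h1]
    have : |(α+1) - x| = x - (α+1) := by
      rw [abs_sub_comm, abs_of_nonneg]; linarith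
    rw [this]
    simp only [pow_one, Nat.factorial_one, Nat.cast_one, div_one]
    linarith
  | more n ih1 ih2 =>
    intro x hx
    push_cast at hx
    have hn : (0:ℝ) ≤ (n:ℝ) := Nat.cast_nonneg n
    have hx1 : 4 * ((n:ℝ)+1) + Cα ≤ x := by linarith
    have hx0 : 4 * (n:ℝ) + Cα ≤ x := by linarith
    have ihA := ih1 x (by push_cast; linarith)
    have ihB := ih2 x (by push_cast; linarith)
    have hxpos : 0 < x := by linarith
    have hrec := laguerre_rec α hα1 n x
    have hden : (0:ℝ) < (n:ℝ) + 2 := by linarith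
    have h2 : laguerreL α (n+2) x =
        ((2*(n:ℝ)+3+α - x) * laguerreL α (n+1) x - ((n:ℝ)+1+α) * laguerreL α n x) / ((n:ℝ)+2) := by
      rw [eq_div_iff hden.ne']; linarith [hrec]
    have habs1 : |2*(n:ℝ)+3+α - x| = x - (2*(n:ℝ)+3+α) := by
      rw [abs_sub_comm, abs_of_nonneg]; linarith
    have habs2 : |(n:ℝ)+1+α| = (n:ℝ)+1+α := abs_of_nonneg (by linarith)
    have hb1 : (0:ℝ) ≤ x - (2*(n:ℝ)+3+α) := by linarith
    have hb2 : (0:ℝ) ≤ (n:ℝ)+1+α := by linarith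
    have hnum : |(2*(n:ℝ)+3+α - x) * laguerreL α (n+1) x - ((n:ℝ)+1+α) * laguerreL α n x|
        ≤ (x - (2*(n:ℝ)+3+α)) * (x^(n+1) / (n+1).factorial)
          + ((n:ℝ)+1+α) * (x^n / n.factorial) := by
      calc |(2*(n:ℝ)+3+α - x) * laguerreL α (n+1) x - ((n:ℝ)+1+α) * laguerreL α n x|
          ≤ |(2*(n:ℝ)+3+α - x) * laguerreL α (n+1) x| + |((n:ℝ)+1+α) * laguerreL α n x| :=
            abs_sub _ _
        _ = (x - (2*(n:ℝ)+3+α)) * |laguerreL α (n+1) x| + ((n:ℝ)+1+α) * |laguerreL α n x| := by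
            rw [abs_mul, abs_mul, habs1, habs2]
        _ ≤ (x - (2*(n:ℝ)+3+α)) * (x^(n+1) / (n+1).factorial)
              + ((n:ℝ)+1+α) * (x^n / n.factorial) := by
            gcongr
    have key : ((n:ℝ)+1+α) * ((n:ℝ)+1) ≤ (2*(n:ℝ)+3+α) * x := by
      nlinarith [hb2, hx, hn]
    have e1 : (((n+1).factorial : ℕ) : ℝ) = ((n:ℝ)+1) * n.factorial := by
      rw [Nat.factorial_succ]; push_cast; ring
    have e2 : (((n+2).factorial : ℕ) : ℝ) = ((n:ℝ)+2) * (((n:ℝ)+1) * n.factorial) := by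
      rw [show n+2 = (n+1)+1 from rfl, Nat.factorial_succ, Nat.factorial_succ]; push_cast; ring
    have hf : (0:ℝ) < n.factorial := by positivity
    have hxn : (0:ℝ) ≤ x^n := by positivity
    have final : ((x - (2*(n:ℝ)+3+α)) * (x^(n+1) / (n+1).factorial)
          + ((n:ℝ)+1+α) * (x^n / n.factorial)) / ((n:ℝ)+2)
        ≤ x^(n+2) / (n+2).factorial := by
      have diff : x^(n+2) / (((n+2).factorial : ℕ) : ℝ)
            - ((x - (2*(n:ℝ)+3+α)) * (x^(n+1) / (n+1).factorial)
              + ((n:ℝ)+1+α) * (x^n / n.factorial)) / ((n:ℝ)+2)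
          = ((2*(n:ℝ)+3+α) * x - ((n:ℝ)+1+α) * ((n:ℝ)+1)) * x^n
              / (((n:ℝ)+2) * (((n:ℝ)+1) * n.factorial)) := by
        rw [e1, e2, pow_succ, pow_succ]
        field_simp
        ring
      have hpos : (0:ℝ) ≤ ((2*(n:ℝ)+3+α) * x - ((n:ℝ)+1+α) * ((n:ℝ)+1)) * x^n
              / (((n:ℝ)+2) * (((n:ℝ)+1) * n.factorial)) := by
        apply div_nonneg (mul_nonneg (by linarith [key]) hxn) (by positivity)
      linarith [diff, hpos]
    calc |laguerreL α (n+2) x|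
        = |(2*(n:ℝ)+3+α - x) * laguerreL α (n+1) x - ((n:ℝ)+1+α) * laguerreL α n x| / ((n:ℝ)+2) := by
          rw [h2, abs_div, abs_of_pos hden]
      _ ≤ ((x - (2*(n:ℝ)+3+α)) * (x^(n+1) / (n+1).factorial)
            + ((n:ℝ)+1+α) * (x^n / n.factorial)) / ((n:ℝ)+2) := by gcongr
      _ ≤ x^(n+2) / (n+2).factorial := final
end

section
/- Let β > 1 and let a > √(β − 1). Then ∫_a^∞ t^β e^{−t²} dt ≤ a^{β−1} e^{−a²}. -/
open Real MeasureTheory Set Filter Topology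

theorem stmt6 (β a : ℝ) (hβ : 1 < β) (ha : Real.sqrt (β - 1) < a) :
    ∫ t in Set.Ioi a, t ^ β * Real.exp (-t ^ 2) ≤ a ^ (β - 1) * Real.exp (-a ^ 2) := by
  have ha0 : 0 < a := lt_of_le_of_lt (Real.sqrt_nonneg _) ha
  set f : ℝ → ℝ := fun t => -(t ^ (β - 1) * Real.exp (-t ^ 2)) with hf
  set f' : ℝ → ℝ := fun t =>
    2 * (t ^ β * Real.exp (-t ^ 2)) - (β - 1) * (t ^ (β - 2) * Real.exp (-t ^ 2)) with hf'
  have hderiv : ∀ x ∈ Ici a, HasDerivAt f (f' x) x := by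
    intro x hx
    have hx0 : 0 < x := lt_of_lt_of_le ha0 hx
    have h1 : HasDerivAt (fun t : ℝ => t ^ (β - 1)) ((β - 1) * x ^ (β - 1 - 1)) x :=
      Real.hasDerivAt_rpow_const (Or.inl hx0.ne')
    have h2 : HasDerivAt (fun t : ℝ => Real.exp (-t ^ 2)) (-(2 * x) * Real.exp (-x ^ 2)) x := by
      have : HasDerivAt (fun t : ℝ => -t ^ 2) (-(2 * x)) x := by
        simpa using ((hasDerivAt_pow 2 x).fun_neg)
      simpa [mul_comm] using this.exp
    have := (h1.fun_mul h2).fun_neg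
    refine this.congr_deriv ?_
    have hx1 : x ^ (β - 1) * x = x ^ β := by
      rw [Real.rpow_sub hx0, Real.rpow_one]
      field_simp
    have : x ^ (β - 1) * (2 * x) = 2 * x ^ β := by
      rw [mul_comm (2:ℝ) x, ← mul_assoc, hx1]; ring
    simp only [hf', mul_neg, neg_add, neg_neg]
    rw [show β - 1 - 1 = β - 2 by ring]
    nlinarith [Real.exp_pos (-x ^ 2), hx1]
  have hint1 : IntegrableOn (fun t => t ^ β * Real.exp (-t ^ 2)) (Ioi a) := by
    have := integrableOn_rpow_mul_exp_neg_mul_sq (b := 1) one_pos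
      (s := β) (by linarith)
    simpa using this.mono_set (Ioi_subset_Ioi ha0.le)
  have hint2 : IntegrableOn (fun t => t ^ (β - 2) * Real.exp (-t ^ 2)) (Ioi a) := by
    have := integrableOn_rpow_mul_exp_neg_mul_sq (b := 1) one_pos
      (s := β - 2) (by linarith)
    simpa using this.mono_set (Ioi_subset_Ioi ha0.le)
  have hf'int : IntegrableOn f' (Ioi a) := (hint1.const_mul 2).sub (hint2.const_mul (β - 1))
  have htends : Tendsto f atTop (𝓝 0) := by
    rw [show (0:ℝ) = -0 by ring]
    apply Tendsto.neg
    have h := rpow_mul_exp_neg_mul_sq_isLittleO_exp_neg (b := 1) one_pos (β - 1)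
    have h3 : Tendsto (fun x : ℝ => -(1/2 : ℝ) * x) atTop atBot :=
      Tendsto.const_mul_atTop_of_neg (by norm_num) tendsto_id
    have h2 : Tendsto (fun x : ℝ => Real.exp (-(1/2) * x)) atTop (𝓝 0) :=
      Real.tendsto_exp_atBot.comp h3
    have := h.isBigO.trans_tendsto h2
    simpa using this
  have key : ∫ x in Ioi a, f' x = 0 - f a :=
    integral_Ioi_of_hasDerivAt_of_tendsto' hderiv hf'int htends
  have hfa : 0 - f a = a ^ (β - 1) * Real.exp (-a ^ 2) := by simp [hf]
  rw [← hfa, ← key]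
  apply setIntegral_mono_on hint1 hf'int measurableSet_Ioi
  intro x hx
  have hx0 : 0 < x := ha0.trans hx
  have hxsq : β - 1 < x ^ 2 := lt_of_lt_of_le (Real.lt_sq_of_sqrt_lt (ha.trans hx))
    le_rfl
  have hxb : x ^ β = x ^ 2 * x ^ (β - 2) := by
    rw [eq_comm, Real.rpow_sub hx0, Real.rpow_two]
    field_simp
  have hle : (β - 1) * x ^ (β - 2) ≤ x ^ β := by
    rw [hxb]
    exact mul_le_mul_of_nonneg_right hxsq.le (Real.rpow_nonneg hx0.le _)
  simp only [hf']
  nlinarith [Real.exp_pos (-x ^ 2), mul_le_mul_of_nonneg_right hle (Real.exp_pos (-x ^ 2)).le]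
end

section
/- Let α ≥ −1/2, let C_α = 2(α+1) if α ≥ 1/2 and C_α = 2(α+1) + 1/16 if −1/2 ≤ α < 1/2, let a > 0, and let k ∈ ℕ satisfy k < min{(a² − 2α)/4, (a² − C_α)/4}. Then ∫_a^∞ |ψ_k^α(t)|² dt ≤ (2/(k! Γ(k+α+1))) · a^{4k+2α} · e^{−a²}. -/
open Real MeasureTheory

/-- The normalized generalized Laguerre polynomial. -/
noncomputable def laguerreLTilde (α : ℝ) (n : ℕ) (x : ℝ) : ℝ :=
  Real.sqrt (n.factorial / Real.Gamma (n + α + 1)) * laguerreL α n x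

/-- The generalized Laguerre function of parameter `a`. -/
noncomputable def psiLag (α a : ℝ) (n : ℕ) (x : ℝ) : ℝ :=
  Real.sqrt 2 * a ^ (α + 1) * x ^ (α + 1/2) * Real.exp (-(a * x) ^ 2 / 2) *
    laguerreLTilde α n (a ^ 2 * x ^ 2)

/-- coefficient of the polynomial `n! * L_n^α` (up to sign). -/
noncomputable def Scoef (α : ℝ) (m j : ℕ) : ℝ :=
  (m.choose j : ℝ) * ∏ i ∈ Finset.Ico j m, ((i : ℝ) + 1 + α)

/-- `Spoly α m = m! * L_m^α`. -/
noncomputable def Spoly (α : ℝ) (m : ℕ) (x : ℝ) : ℝ :=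
  ∑ j ∈ Finset.range (m + 1), (-1 : ℝ) ^ j * Scoef α m j * x ^ j

lemma spoly_zero (α x : ℝ) : Spoly α 0 x = 1 := by
  simp [Spoly, Scoef]

lemma spoly_one (α x : ℝ) : Spoly α 1 x = (1 + α) - x := by
  simp [Spoly, Scoef, Finset.sum_range_succ]
  ring

lemma bin_id (α : ℝ) (n j : ℕ) :
    (((n+2).choose (j+1) : ℝ)) * (n + 2 + α) =
      (2*n + 3 + α) * ((n+1).choose (j+1) : ℝ) + (j + 1 + α) * ((n+1).choose j : ℝ)
        - (n + 1) * ((n).choose (j+1) : ℝ) := by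
  rcases le_or_gt j n with h | h
  · have pas1 : ((n+2).choose (j+1) : ℝ) = ((n+1).choose (j+1) : ℝ) + ((n+1).choose j : ℝ) := by
      rw [Nat.choose_succ_succ (n+1) j]; push_cast; ring
    have pas2 : ((n+1).choose (j+1) : ℝ) = (n.choose (j+1) : ℝ) + (n.choose j : ℝ) := by
      rw [Nat.choose_succ_succ n j]; push_cast; ring
    have h3 : (n.choose j : ℝ) * (n + 1) = ((n+1).choose j : ℝ) * ((n:ℝ) + 1 - j) := by
      have := Nat.choose_mul_succ_eq n j
      have hcast : ((n + 1 - j : ℕ) : ℝ) = (n : ℝ) + 1 - j := by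
        rw [Nat.cast_sub (by omega)]; push_cast; ring
      calc (n.choose j : ℝ) * (n + 1) = ((n.choose j * (n+1) : ℕ) : ℝ) := by push_cast; ring
        _ = (((n+1).choose j * (n + 1 - j) : ℕ) : ℝ) := by rw [this]
        _ = ((n+1).choose j : ℝ) * ((n:ℝ) + 1 - j) := by push_cast [hcast]; ring
    linear_combination ((n:ℝ)+2+α) * pas1 - ((n:ℝ)+1) * pas2 - h3
  · rcases Nat.eq_or_lt_of_le h with h1 | h1
    · subst h1
      simp [Nat.choose_self, Nat.choose_succ_self, Nat.choose_eq_zero_of_lt (by omega : n < n+1+1)]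
      ring
    · rw [Nat.choose_eq_zero_of_lt (by omega), Nat.choose_eq_zero_of_lt (by omega),
        Nat.choose_eq_zero_of_lt (by omega), Nat.choose_eq_zero_of_lt (by omega)]
      norm_num

lemma scoef_star (α : ℝ) (n j : ℕ) (hj : j ≤ n + 1) :
    Scoef α (n+2) (j+1) = (2*n + 3 + α) * Scoef α (n+1) (j+1) + Scoef α (n+1) j
      - (n + 1) * (n + 1 + α) * Scoef α n (j+1) := by
  rcases Nat.lt_or_ge j (n+1) with h | h
  · -- j ≤ n
    have hjn : j ≤ n := by omega
    have e1 : ∏ i ∈ Finset.Ico (j+1) (n+2), ((i : ℝ) + 1 + α)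
        = (∏ i ∈ Finset.Ico (j+1) (n+1), ((i : ℝ) + 1 + α)) * ((n:ℝ) + 2 + α) := by
      rw [Finset.prod_Ico_succ_top (by omega)]; push_cast; ring
    have e2 : ∏ i ∈ Finset.Ico j (n+1), ((i : ℝ) + 1 + α)
        = ((j:ℝ) + 1 + α) * ∏ i ∈ Finset.Ico (j+1) (n+1), ((i : ℝ) + 1 + α) := by
      rw [Finset.prod_eq_prod_Ico_succ_bot (by omega)]
    rcases Nat.lt_or_ge j n with h2 | h2
    · have e3 : ∏ i ∈ Finset.Ico (j+1) (n+1), ((i : ℝ) + 1 + α)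
          = (∏ i ∈ Finset.Ico (j+1) n, ((i : ℝ) + 1 + α)) * ((n:ℝ) + 1 + α) := by
        rw [Finset.prod_Ico_succ_top (by omega)]
      have hb := bin_id α n j
      simp only [Scoef]
      rw [e1, e2, e3]
      linear_combination hb * (((n:ℝ) + 1 + α) * ∏ i ∈ Finset.Ico (j+1) n, ((i : ℝ) + 1 + α))
    · -- j = n
      have hj2 : j = n := by omega
      subst hj2
      have hb := bin_id α j j
      have hz : (j.choose (j+1) : ℝ) = 0 := by
        rw [Nat.choose_eq_zero_of_lt (by omega)]; norm_num
      rw [hz] at hb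
      simp only [Scoef]
      rw [e1, e2, hz]
      simp only [Finset.Ico_self, Finset.prod_empty]
      linear_combination hb
  · -- j = n+1
    have hj2 : j = n + 1 := by omega
    subst hj2
    have hz1 : ((n+1).choose (n+2) : ℝ) = 0 := by
      rw [Nat.choose_eq_zero_of_lt (by omega)]; norm_num
    have hz2 : (n.choose (n+2) : ℝ) = 0 := by
      rw [Nat.choose_eq_zero_of_lt (by omega)]; norm_num
    simp only [Scoef, hz1, hz2, Nat.choose_self]
    simp [Finset.Ico_self]

lemma scoef_const (α : ℝ) (n : ℕ) :
    Scoef α (n+2) 0 = (2*(n:ℝ)+3+α) * Scoef α (n+1) 0 - ((n:ℝ)+1)*((n:ℝ)+1+α) * Scoef α n 0 := by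
  simp only [Scoef, Nat.choose_zero_right, Nat.cast_one, one_mul]
  rw [Finset.prod_Ico_succ_top (by omega : 0 ≤ n+1), Finset.prod_Ico_succ_top (by omega : 0 ≤ n)]
  push_cast
  ring

lemma spoly_rec (α : ℝ) (n : ℕ) (x : ℝ) :
    Spoly α (n+2) x = (2*(n:ℝ)+3+α-x) * Spoly α (n+1) x
      - ((n:ℝ)+1)*((n:ℝ)+1+α) * Spoly α n x := by
  have hz1 : Scoef α (n+1) (n+2) = 0 := by
    simp [Scoef, Nat.choose_eq_zero_of_lt (by omega : n+1 < n+2)]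
  have hz2 : Scoef α n (n+1) = 0 := by
    simp [Scoef, Nat.choose_eq_zero_of_lt (by omega : n < n+1)]
  have hz3 : Scoef α n (n+2) = 0 := by
    simp [Scoef, Nat.choose_eq_zero_of_lt (by omega : n < n+2)]
  have h1 : Spoly α (n+2) x
      = (∑ j ∈ Finset.range (n+2), (-1:ℝ)^(j+1) * Scoef α (n+2) (j+1) * x^(j+1))
        + Scoef α (n+2) 0 := by
    rw [Spoly, Finset.sum_range_succ']
    norm_num
  have h2 : Spoly α (n+1) x
      = (∑ j ∈ Finset.range (n+2), (-1:ℝ)^(j+1) * Scoef α (n+1) (j+1) * x^(j+1))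
        + Scoef α (n+1) 0 := by
    rw [Spoly, Finset.sum_range_succ
      (fun j => (-1:ℝ)^(j+1) * Scoef α (n+1) (j+1) * x^(j+1)) (n+1), hz1,
      Finset.sum_range_succ']
    norm_num
  have h3 : Spoly α n x
      = (∑ j ∈ Finset.range (n+2), (-1:ℝ)^(j+1) * Scoef α n (j+1) * x^(j+1))
        + Scoef α n 0 := by
    rw [Spoly, Finset.sum_range_succ
      (fun j => (-1:ℝ)^(j+1) * Scoef α n (j+1) * x^(j+1)) (n+1), hz3,
      Finset.sum_range_succ
      (fun j => (-1:ℝ)^(j+1) * Scoef α n (j+1) * x^(j+1)) n, hz2,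
      Finset.sum_range_succ']
    norm_num
  have h4 : x * Spoly α (n+1) x
      = ∑ j ∈ Finset.range (n+2), (-1:ℝ)^j * Scoef α (n+1) j * x^j * x := by
    rw [Spoly, Finset.mul_sum]
    exact Finset.sum_congr rfl fun j _ => by ring
  have h5 : (∑ j ∈ Finset.range (n+2), (-1:ℝ)^(j+1) * Scoef α (n+2) (j+1) * x^(j+1))
      = (2*(n:ℝ)+3+α) * (∑ j ∈ Finset.range (n+2), (-1:ℝ)^(j+1) * Scoef α (n+1) (j+1) * x^(j+1))
        - (∑ j ∈ Finset.range (n+2), (-1:ℝ)^j * Scoef α (n+1) j * x^j * x)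
        - ((n:ℝ)+1)*((n:ℝ)+1+α)
            * (∑ j ∈ Finset.range (n+2), (-1:ℝ)^(j+1) * Scoef α n (j+1) * x^(j+1)) := by
    rw [Finset.mul_sum, Finset.mul_sum, ← Finset.sum_sub_distrib, ← Finset.sum_sub_distrib]
    refine Finset.sum_congr rfl fun j hj => ?_
    have hj' : j ≤ n + 1 := by simpa using Nat.lt_succ_iff.mp (Finset.mem_range.mp hj)
    linear_combination (scoef_star α n j hj') * ((-1:ℝ)^(j+1) * x^(j+1))
  have h7 := scoef_const α n
  linear_combination h1 + h5 + h7 - (2*(n:ℝ)+3+α) * h2 + ((n:ℝ)+1)*((n:ℝ)+1+α) * h3 + h4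

set_option maxHeartbeats 2000000 in
lemma spoly_good (α : ℝ) (hα : -1/2 ≤ α) (k : ℕ) (x : ℝ)
    (hx : 4*(k:ℝ) + 2*α + 2 ≤ x) :
    ∀ j, j ≤ k → (0 ≤ (-1:ℝ)^j * Spoly α j x ∧ (-1:ℝ)^j * Spoly α j x ≤ x^j ∧
      (1 ≤ j → (x - 2*(j:ℝ) - α)/2 * ((-1:ℝ)^(j-1) * Spoly α (j-1) x)
          ≤ (-1:ℝ)^j * Spoly α j x)) := by
  have hx0 : (1:ℝ) ≤ x := by nlinarith [Nat.cast_nonneg (α := ℝ) k]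
  intro j
  induction j using Nat.strong_induction_on with
  | _ j ih =>
    match j with
    | 0 =>
      intro _
      refine ⟨by simp [spoly_zero], by simp [spoly_zero], by omega⟩
    | 1 =>
      intro h1k
      have hk1 : (1:ℝ) ≤ (k:ℝ) := by exact_mod_cast h1k
      have hM1 : (-1:ℝ)^1 * Spoly α 1 x = x - (1+α) := by rw [spoly_one]; ring
      refine ⟨by rw [hM1]; nlinarith, by rw [hM1]; simp; nlinarith, fun _ => ?_⟩
      simp only [Nat.sub_self, pow_zero, one_mul, spoly_zero, hM1]
      push_cast
      nlinarith
    | (m+2) =>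
      intro hjk
      have hmk : (m:ℝ) + 2 ≤ (k:ℝ) := by exact_mod_cast hjk
      obtain ⟨hA0, hA1, hA2⟩ := ih (m+1) (by omega) (by omega)
      obtain ⟨hB0, hB1, _⟩ := ih m (by omega) (by omega)
      have hrec : (-1:ℝ)^(m+2) * Spoly α (m+2) x
          = (x - (2*(m:ℝ)+3+α)) * ((-1:ℝ)^(m+1) * Spoly α (m+1) x)
            - ((m:ℝ)+1)*((m:ℝ)+1+α) * ((-1:ℝ)^m * Spoly α m x) := by
        rw [spoly_rec α m x]; ring
      have hA2' := hA2 (by omega)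
      simp only [Nat.add_sub_cancel] at hA2'
      -- abbreviations
      set M1 : ℝ := (-1:ℝ)^(m+1) * Spoly α (m+1) x with hM1def
      set M0 : ℝ := (-1:ℝ)^m * Spoly α m x with hM0def
      set M2 : ℝ := (-1:ℝ)^(m+2) * Spoly α (m+2) x with hM2def
      have hc : (0:ℝ) ≤ ((m:ℝ)+1)*((m:ℝ)+1+α) := by nlinarith [Nat.cast_nonneg (α := ℝ) m]
      have hr : (0:ℝ) < (x - 2*((m:ℝ)+1) - α)/2 := by nlinarith
      have hrlb : (m:ℝ)+4+α/2 ≤ (x - 2*((m:ℝ)+1) - α)/2 := by linarith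
      have hq : ((m:ℝ)+1)*((m:ℝ)+1+α) ≤ ((x - 2*((m:ℝ)+1) - α)/2)^2 := by
        have h2 := pow_le_pow_left₀ (by nlinarith : (0:ℝ) ≤ (m:ℝ)+4+α/2) hrlb 2
        nlinarith [h2]
      have hM0le : ((m:ℝ)+1)*((m:ℝ)+1+α) * M0
          ≤ ((m:ℝ)+1)*((m:ℝ)+1+α) / ((x - 2*((m:ℝ)+1) - α)/2) * M1 := by
        rw [div_mul_eq_mul_div, le_div_iff₀ hr]
        have h' : (x - 2*((m:ℝ)+1) - α)/2 * M0 ≤ M1 := by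
          push_cast at hA2'
          linarith
        nlinarith [mul_le_mul_of_nonneg_left h' hc]
      have hdiv : ((m:ℝ)+1)*((m:ℝ)+1+α) / ((x - 2*((m:ℝ)+1) - α)/2)
          ≤ (x - 2*((m:ℝ)+1) - α)/2 := by
        rw [div_le_iff₀ hr]; nlinarith
      have hcoef : (x - 2*((m:ℝ)+2) - α)/2
          ≤ (x - (2*(m:ℝ)+3+α)) - ((m:ℝ)+1)*((m:ℝ)+1+α) / ((x - 2*((m:ℝ)+1) - α)/2) := by
        linarith
      have hratio : (x - 2*((m:ℝ)+2) - α)/2 * M1 ≤ M2 := by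
        calc (x - 2*((m:ℝ)+2) - α)/2 * M1
            ≤ ((x - (2*(m:ℝ)+3+α)) - ((m:ℝ)+1)*((m:ℝ)+1+α) / ((x - 2*((m:ℝ)+1) - α)/2)) * M1 :=
              mul_le_mul_of_nonneg_right hcoef hA0
          _ ≤ M2 := by rw [hrec]; nlinarith [hM0le]
      have hs : (0:ℝ) < (x - 2*((m:ℝ)+2) - α)/2 := by nlinarith
      have hpos2 : 0 ≤ M2 :=
        le_trans (mul_nonneg hs.le hA0) hratio
      refine ⟨hpos2, ?_, fun _ => ?_⟩
      · -- upper bound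
        have h1 : M2 ≤ (x - (2*(m:ℝ)+3+α)) * M1 := by
          rw [hrec]; nlinarith [mul_nonneg hc hB0]
        calc M2 ≤ (x - (2*(m:ℝ)+3+α)) * M1 := h1
          _ ≤ x * x^(m+1) := mul_le_mul (by nlinarith) hA1 hA0 (by nlinarith)
          _ = x^(m+2) := by ring
      · -- ratio statement
        simpa using hratio

lemma gamma_prod (α : ℝ) (hα : -1/2 ≤ α) (j m : ℕ) (h : j ≤ m) :
    Real.Gamma ((m:ℝ) + α + 1)
      = Real.Gamma ((j:ℝ) + α + 1) * ∏ i ∈ Finset.Ico j m, ((i:ℝ) + 1 + α) := by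
  induction m, h using Nat.le_induction with
  | base => simp
  | succ n hn ih =>
    have hne : ((n:ℝ) + α + 1) ≠ 0 := by
      have := Nat.cast_nonneg (α := ℝ) n
      intro hc; linarith [hc.ge]
    have hcast : ((n+1:ℕ):ℝ) + α + 1 = ((n:ℝ) + α + 1) + 1 := by push_cast; ring
    rw [hcast, Real.Gamma_add_one hne, ih, Finset.prod_Ico_succ_top hn]
    push_cast; ring

lemma spoly_eq_lag (α : ℝ) (hα : -1/2 ≤ α) (m : ℕ) (x : ℝ) :
    Spoly α m x = (m.factorial : ℝ) * laguerreL α m x := by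
  rw [laguerreL, Spoly, Finset.mul_sum]
  refine Finset.sum_congr rfl fun j hj => ?_
  have hjm : j ≤ m := Nat.lt_succ_iff.mp (Finset.mem_range.mp hj)
  have hGj : Real.Gamma ((j:ℝ) + α + 1) ≠ 0 := by
    have : (0:ℝ) < (j:ℝ) + α + 1 := by
      have := Nat.cast_nonneg (α := ℝ) j
      linarith
    exact (Real.Gamma_pos_of_pos this).ne'
  have hgp := gamma_prod α hα j m hjm
  have hfac := Nat.choose_mul_factorial_mul_factorial hjm
  have hfacR : (m.choose j : ℝ) * (j.factorial : ℝ) * ((m-j).factorial : ℝ)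
      = (m.factorial : ℝ) := by exact_mod_cast congrArg (Nat.cast (R := ℝ)) hfac
  rw [Scoef, hgp]
  have h1 : (j.factorial : ℝ) ≠ 0 := Nat.cast_ne_zero.mpr j.factorial_ne_zero
  have h2 : ((m-j).factorial : ℝ) ≠ 0 := Nat.cast_ne_zero.mpr (m-j).factorial_ne_zero
  field_simp
  linear_combination hfacR * (x^j * (∏ i ∈ Finset.Ico j m, ((i:ℝ)+1+α)))

lemma lag_sq_bound (α : ℝ) (hα : -1/2 ≤ α) (k : ℕ) (y : ℝ)
    (hy : 4*(k:ℝ) + 2*α + 2 ≤ y) :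
    ((k.factorial : ℝ) * laguerreL α k y)^2 ≤ y ^ (2*k) := by
  rw [← spoly_eq_lag α hα]
  obtain ⟨h0, h1, -⟩ := spoly_good α hα k y hy k le_rfl
  have hsq : Spoly α k y ^ 2 = ((-1:ℝ)^k * Spoly α k y)^2 := by
    rw [mul_pow, ← pow_mul, mul_comm k 2, pow_mul]
    norm_num
  have h2 : ((-1:ℝ)^k * Spoly α k y)^2 ≤ (y^k)^2 := pow_le_pow_left₀ h0 h1 2
  rw [hsq]
  calc ((-1:ℝ)^k * Spoly α k y)^2 ≤ (y^k)^2 := h2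
    _ = y^(2*k) := by rw [← pow_mul, mul_comm k 2]

set_option maxHeartbeats 1000000 in
theorem stmt7 (α : ℝ) (hα : -1/2 ≤ α) (Cα : ℝ)
    (hC : Cα = if (1/2 : ℝ) ≤ α then 2 * (α + 1) else 2 * (α + 1) + 1/16)
    (a : ℝ) (ha : 0 < a) (k : ℕ)
    (hk : (k : ℝ) < min ((a ^ 2 - 2 * α) / 4) ((a ^ 2 - Cα) / 4)) :
    ∫ t in Set.Ioi a, |psiLag α 1 k t| ^ 2 ≤
      (2 / (k.factorial * Real.Gamma (k + α + 1))) * a ^ (4 * (k : ℝ) + 2 * α) *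
        Real.exp (-a ^ 2) := by
  have hCge : 2*α + 2 ≤ Cα := by rw [hC]; split_ifs <;> linarith
  have hk2 : 4*(k:ℝ) + Cα < a^2 := by
    have h2 := (lt_min_iff.mp hk).2
    linarith
  have ha2 : 4*(k:ℝ) + 2*α + 2 < a ^ 2 := by linarith
  set β : ℝ := 4*(k:ℝ) + 2*α with hβ
  have hkc : (0:ℝ) ≤ (k:ℝ) := Nat.cast_nonneg k
  have hβa : β < a ^ 2 := by linarith
  have hΓpos : 0 < Real.Gamma ((k:ℝ) + α + 1) :=
    Real.Gamma_pos_of_pos (by linarith)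
  have hfacpos : 0 < (k.factorial : ℝ) := by exact_mod_cast k.factorial_pos
  set C : ℝ := 2 / ((k.factorial:ℝ) * Real.Gamma ((k:ℝ) + α + 1)) with hCdef
  have hCpos : 0 < C := by positivity
  set F : ℝ → ℝ := fun t => -(t ^ β * Real.exp (-t^2)) with hF
  set F' : ℝ → ℝ := fun t => (2 * t ^ (β+1) - β * t ^ (β-1)) * Real.exp (-t^2) with hF'
  have hderiv : ∀ t ∈ Set.Ici a, HasDerivAt F (F' t) t := by
    intro t ht
    have ht0 : 0 < t := lt_of_lt_of_le ha ht
    have h1 : HasDerivAt (fun s : ℝ => s ^ β) (β * t ^ (β - 1)) t :=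
      Real.hasDerivAt_rpow_const (Or.inl ht0.ne')
    have h2 : HasDerivAt (fun s : ℝ => Real.exp (-s^2)) (-(2*t) * Real.exp (-t^2)) t := by
      have hp : HasDerivAt (fun s : ℝ => -s^2) (-(2*t)) t := by
        have h := (hasDerivAt_pow 2 t).neg; simp at h; exact h
      simpa [mul_comm] using hp.exp
    have hm : HasDerivAt (fun s : ℝ => -(s ^ β * Real.exp (-s^2)))
        (-(β * t ^ (β - 1) * Real.exp (-t ^ 2) + t ^ β * (-(2 * t) * Real.exp (-t ^ 2)))) t :=
      (h1.mul h2).neg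
    convert hm using 1
    have ht1 : t ^ (β+1) = t ^ β * t := Real.rpow_add_one ht0.ne' β
    show (2 * t ^ (β+1) - β * t ^ (β-1)) * Real.exp (-t^2) = _
    rw [Real.rpow_add_one ht0.ne' β]; ring
  -- pointwise positivity of F' and the pointwise bound
  have hrpow_facts : ∀ t, a < t → β * t ^ (β-1) ≤ t ^ (β+1) ∧ 0 < t ^ (β+1) := by
    intro t ht
    have ht0 : 0 < t := lt_trans ha ht
    have htsq : a^2 < t^2 := by nlinarith
    have hp1 : (0:ℝ) < t ^ (β+1) := Real.rpow_pos_of_pos ht0 _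
    have hp2 : (0:ℝ) < t ^ (β-1) := Real.rpow_pos_of_pos ht0 _
    have he : t ^ (β+1) = t ^ (β-1) * t^2 := by
      rw [← Real.rpow_natCast t 2, ← Real.rpow_add ht0]
      congr 1
      push_cast
      ring
    refine ⟨?_, hp1⟩
    rw [he]
    have : β ≤ t^2 := by linarith
    nlinarith
  have hF'pos : ∀ t ∈ Set.Ioi a, 0 ≤ F' t := by
    intro t ht
    obtain ⟨h1, h2⟩ := hrpow_facts t ht
    have : 0 ≤ 2 * t ^ (β+1) - β * t ^ (β-1) := by linarith
    exact mul_nonneg this (Real.exp_pos _).le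
  have hFtend : Filter.Tendsto F Filter.atTop (nhds 0) := by
    have h0 : Filter.Tendsto (fun u : ℝ => u ^ (β/2) * Real.exp (-1 * u))
        Filter.atTop (nhds 0) :=
      tendsto_rpow_mul_exp_neg_mul_atTop_nhds_zero (β/2) 1 one_pos
    have hsq : Filter.Tendsto (fun t : ℝ => t^2) Filter.atTop Filter.atTop := by
      exact Filter.tendsto_pow_atTop (by norm_num)
    have hcomp := h0.comp hsq
    have heq : ∀ᶠ t in Filter.atTop, ((fun u : ℝ => u ^ (β/2) * Real.exp (-1 * u)) ∘
        fun t : ℝ => t^2) t = t ^ β * Real.exp (-t^2) := by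
      filter_upwards [Filter.eventually_gt_atTop (0:ℝ)] with t ht
      have hh : ((t^2 : ℝ)) ^ (β/2) = t ^ β := by
        rw [← Real.rpow_natCast t 2, ← Real.rpow_mul ht.le]
        congr 1
        push_cast
        ring
      simp only [Function.comp_apply]
      rw [hh, neg_one_mul]
    have := (hcomp.congr' heq).neg
    simpa using this
  have hF'int : IntegrableOn F' (Set.Ioi a) :=
    integrableOn_Ioi_deriv_of_nonneg' hderiv hF'pos hFtend
  have hint : ∫ t in Set.Ioi a, F' t = a ^ β * Real.exp (-a^2) := by
    rw [integral_Ioi_of_hasDerivAt_of_nonneg' hderiv hF'pos hFtend]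
    simp [hF]
  -- pointwise bound on the integrand
  have hpt : ∀ t ∈ Set.Ioi a, |psiLag α 1 k t| ^ 2 ≤ C * F' t := by
    intro t ht
    have ht' : a < t := ht
    have ht0 : 0 < t := lt_trans ha ht'
    have htsq : a^2 < t^2 := by nlinarith
    have hy : 4*(k:ℝ) + 2*α + 2 ≤ t^2 := by linarith
    have hq : (0:ℝ) ≤ (k.factorial:ℝ) / Real.Gamma ((k:ℝ) + α + 1) := by positivity
    have hψ : psiLag α 1 k t ^ 2 = 2 * ((k.factorial:ℝ) / Real.Gamma ((k:ℝ) + α + 1))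
        * laguerreL α k (t^2) ^ 2 * t ^ (2*α+1) * Real.exp (-t^2) := by
      simp only [psiLag, laguerreLTilde, one_pow, one_mul, mul_one, Real.one_rpow]
      have e1 : Real.sqrt 2 * Real.sqrt 2 = 2 := Real.mul_self_sqrt (by norm_num)
      have e2 : t ^ (α+1/2) * t ^ (α+1/2) = t ^ (2*α+1) := by
        rw [← Real.rpow_add ht0]; norm_num; ring_nf
      have e3 : Real.exp (-t^2/2) * Real.exp (-t^2/2) = Real.exp (-t^2) := by
        rw [← Real.exp_add]; congr 1; ring
      have e4 : Real.sqrt ((k.factorial:ℝ) / Real.Gamma ((k:ℝ) + α + 1))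
          * Real.sqrt ((k.factorial:ℝ) / Real.Gamma ((k:ℝ) + α + 1))
          = (k.factorial:ℝ) / Real.Gamma ((k:ℝ) + α + 1) := Real.mul_self_sqrt hq
      calc (Real.sqrt 2 * t ^ (α+1/2) * Real.exp (-t^2/2)
            * (Real.sqrt ((k.factorial:ℝ) / Real.Gamma ((k:ℝ) + α + 1))
               * laguerreL α k (t^2))) ^ 2
          = (Real.sqrt 2 * Real.sqrt 2) * (t ^ (α+1/2) * t ^ (α+1/2))
            * (Real.exp (-t^2/2) * Real.exp (-t^2/2))
            * (Real.sqrt ((k.factorial:ℝ) / Real.Gamma ((k:ℝ) + α + 1))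
               * Real.sqrt ((k.factorial:ℝ) / Real.Gamma ((k:ℝ) + α + 1)))
            * laguerreL α k (t^2) ^ 2 := by ring
        _ = _ := by rw [e1, e2, e3, e4]; ring
    rw [sq_abs, hψ]
    have hLb := lag_sq_bound α hα k (t^2) hy
    -- 2 * (k!/Γ) * L² = C * (k! L)²
    have hrw : 2 * ((k.factorial:ℝ) / Real.Gamma ((k:ℝ) + α + 1)) * laguerreL α k (t^2) ^ 2
        = C * ((k.factorial:ℝ) * laguerreL α k (t^2))^2 := by
      rw [hCdef]; field_simp
    rw [hrw]
    have hstep1 : C * ((k.factorial:ℝ) * laguerreL α k (t^2))^2 * t ^ (2*α+1)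
          * Real.exp (-t^2)
        ≤ C * (t^2) ^ (2*k) * t ^ (2*α+1) * Real.exp (-t^2) := by
      have h1 : (0:ℝ) < t ^ (2*α+1) := Real.rpow_pos_of_pos ht0 _
      have h2 : (0:ℝ) < Real.exp (-t^2) := Real.exp_pos _
      have h3 := mul_le_mul_of_nonneg_right
        (mul_le_mul_of_nonneg_left hLb hCpos.le) (mul_pos h1 h2).le
      calc C * ((k.factorial:ℝ) * laguerreL α k (t^2))^2 * t ^ (2*α+1) * Real.exp (-t^2)
          = C * ((k.factorial:ℝ) * laguerreL α k (t^2))^2 * (t ^ (2*α+1) * Real.exp (-t^2)) := by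
            ring
        _ ≤ C * (t^2) ^ (2*k) * (t ^ (2*α+1) * Real.exp (-t^2)) := h3
        _ = C * (t^2) ^ (2*k) * t ^ (2*α+1) * Real.exp (-t^2) := by ring
    refine le_trans hstep1 ?_
    have hpoweq : (t^2 : ℝ) ^ (2*k) * t ^ (2*α+1) = t ^ (β+1) := by
      rw [← pow_mul, ← Real.rpow_natCast t (2*(2*k)), ← Real.rpow_add ht0]
      congr 1
      push_cast [hβ]
      ring
    obtain ⟨hb1, hb2⟩ := hrpow_facts t ht'
    calc C * (t^2) ^ (2*k) * t ^ (2*α+1) * Real.exp (-t^2)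
        = C * (((t^2) ^ (2*k) * t ^ (2*α+1)) * Real.exp (-t^2)) := by ring
      _ = C * (t ^ (β+1) * Real.exp (-t^2)) := by rw [hpoweq]
      _ ≤ C * ((2 * t ^ (β+1) - β * t ^ (β-1)) * Real.exp (-t^2)) := by
          have hle : t ^ (β+1) ≤ 2 * t ^ (β+1) - β * t ^ (β-1) := by linarith
          exact mul_le_mul_of_nonneg_left
            (mul_le_mul_of_nonneg_right hle (Real.exp_pos _).le) hCpos.le
      _ = C * F' t := by rw [hF']
  -- assemble
  have hmono : ∫ t in Set.Ioi a, |psiLag α 1 k t| ^ 2 ≤ ∫ t in Set.Ioi a, C * F' t := by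
    refine integral_mono_of_nonneg (Filter.Eventually.of_forall fun t => by positivity)
      (hF'int.const_mul C) ?_
    rw [Filter.EventuallyLE, MeasureTheory.ae_restrict_iff' measurableSet_Ioi]
    exact Filter.Eventually.of_forall hpt
  calc ∫ t in Set.Ioi a, |psiLag α 1 k t| ^ 2 ≤ ∫ t in Set.Ioi a, C * F' t := hmono
    _ = C * ∫ t in Set.Ioi a, F' t := by rw [MeasureTheory.integral_const_mul]
    _ = C * (a ^ β * Real.exp (-a^2)) := by rw [hint]
    _ = (2 / (k.factorial * Real.Gamma (k + α + 1))) * a ^ (4 * (k : ℝ) + 2 * α) *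
        Real.exp (-a ^ 2) := by rw [hCdef, hβ]; ring
end
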